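/- Composing encoding isometries of stabilizer codes yields a stabilizer code: if M₁ is the Clifford encoding isometry of an [[n₁,k₁]] stabilizer code with stabilizer group S₁, and M₂ is the Clifford encoding isometry of an [[n₂,k₂]] stabilizer code with stabilizer group S₂, applied to m of the n₁ output qubits of M₁ together with k₂−m fresh input qubits (m ≤ n₁, m ≤ k₂), then the composite isometry encodes an [[n₁−m+n₂, k₁+k₂−m]] stabilizer code whose stabilizer group is generated by S₂ and M₂(S₁) (operators extended by identities as needed). -/

import Mathlib

open Matrix

/-- The Pauli operator on the qubits indexed by `ι`, with `X`-part `x` and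
`Z`-part `z`, as a matrix in the computational basis `ι → ZMod 2`. -/
def pauliBase {ι : Type*} [Fintype ι] [DecidableEq ι] (x z : ι → ZMod 2) :
    Matrix (ι → ZMod 2) (ι → ZMod 2) ℂ :=
  Matrix.of fun a b => if a = x + b then (-1 : ℂ) ^ (ZMod.val (∑ i, z i * b i)) else 0

/-- A Pauli operator (including fourth-root-of-unity phases). -/
def IsPauli {ι : Type*} [Fintype ι] [DecidableEq ι]
    (M : Matrix (ι → ZMod 2) (ι → ZMod 2) ℂ) : Prop :=
  ∃ (c : ℂ) (x z : ι → ZMod 2), c ^ 4 = 1 ∧ M = c • pauliBase x z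

/-- Tensor (Kronecker) product of operators on disjoint sets of qubits. -/
def mtensor {ι₁ ι₂ κ₁ κ₂ : Type*}
    (M : Matrix (ι₁ → ZMod 2) (κ₁ → ZMod 2) ℂ)
    (N : Matrix (ι₂ → ZMod 2) (κ₂ → ZMod 2) ℂ) :
    Matrix ((ι₁ ⊕ ι₂) → ZMod 2) ((κ₁ ⊕ κ₂) → ZMod 2) ℂ :=
  Matrix.of fun a b => M (a ∘ Sum.inl) (b ∘ Sum.inl) * N (a ∘ Sum.inr) (b ∘ Sum.inr)

/-- The joint `+1` eigenspace of a set of operators. -/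
def fixedSet {ι : Type*} [Fintype ι] [DecidableEq ι]
    (G : Set (Matrix (ι → ZMod 2) (ι → ZMod 2) ℂ)) : Set ((ι → ZMod 2) → ℂ) :=
  {v | ∀ g ∈ G, g.mulVec v = v}

-- helper: equality of sum-functions componentwise
lemma sum_fun_eq_iff {ι₁ ι₂ : Type*} (a b : (ι₁ ⊕ ι₂) → ZMod 2) :
    a = b ↔ a ∘ Sum.inl = b ∘ Sum.inl ∧ a ∘ Sum.inr = b ∘ Sum.inr := by
  constructor
  · rintro rfl; exact ⟨rfl, rfl⟩
  · rintro ⟨h1, h2⟩; funext i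
    cases i with
    | inl i => exact congrFun h1 i
    | inr i => exact congrFun h2 i

lemma mtensor_mul {ι₁ ι₂ κ₁ κ₂ μ₁ μ₂ : Type*} [Fintype κ₁] [Fintype κ₂] [DecidableEq κ₁] [DecidableEq κ₂]
    (A : Matrix (ι₁ → ZMod 2) (κ₁ → ZMod 2) ℂ) (B : Matrix (ι₂ → ZMod 2) (κ₂ → ZMod 2) ℂ)
    (C : Matrix (κ₁ → ZMod 2) (μ₁ → ZMod 2) ℂ) (D : Matrix (κ₂ → ZMod 2) (μ₂ → ZMod 2) ℂ) :
    mtensor A B * mtensor C D = mtensor (A * C) (B * D) := by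
  ext a b
  simp only [mtensor, Matrix.mul_apply, Matrix.of_apply]
  rw [← Equiv.sum_comp (Equiv.sumArrowEquivProdArrow κ₁ κ₂ (ZMod 2)).symm]
  rw [Fintype.sum_prod_type, Finset.sum_mul_sum]
  refine Finset.sum_congr rfl fun x _ => Finset.sum_congr rfl fun y _ => ?_
  simp only [Equiv.sumArrowEquivProdArrow, Equiv.coe_fn_symm_mk, Sum.elim_comp_inl,
    Sum.elim_comp_inr]
  ring

lemma mtensor_one {ι₁ ι₂ : Type*} [Fintype ι₁] [DecidableEq ι₁] [Fintype ι₂] [DecidableEq ι₂] :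
    mtensor (1 : Matrix (ι₁ → ZMod 2) (ι₁ → ZMod 2) ℂ)
      (1 : Matrix (ι₂ → ZMod 2) (ι₂ → ZMod 2) ℂ) = 1 := by
  ext a b
  simp only [mtensor, Matrix.of_apply, Matrix.one_apply, sum_fun_eq_iff a b]
  by_cases h1 : a ∘ Sum.inl = b ∘ Sum.inl <;> by_cases h2 : a ∘ Sum.inr = b ∘ Sum.inr <;>
    simp [h1, h2]

lemma mtensor_conjTranspose {ι₁ ι₂ κ₁ κ₂ : Type*}
    (A : Matrix (ι₁ → ZMod 2) (κ₁ → ZMod 2) ℂ) (B : Matrix (ι₂ → ZMod 2) (κ₂ → ZMod 2) ℂ) :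
    (mtensor A B)ᴴ = mtensor Aᴴ Bᴴ := by
  ext a b
  simp only [mtensor, Matrix.conjTranspose_apply, Matrix.of_apply, star_mul']

lemma mtensor_smul_left {ι₁ ι₂ κ₁ κ₂ : Type*} (c : ℂ)
    (A : Matrix (ι₁ → ZMod 2) (κ₁ → ZMod 2) ℂ) (B : Matrix (ι₂ → ZMod 2) (κ₂ → ZMod 2) ℂ) :
    mtensor (c • A) B = c • mtensor A B := by
  ext a b
  simp only [mtensor, Matrix.of_apply, Matrix.smul_apply, smul_eq_mul]
  ring

lemma neg_one_pow_val_add (s t : ZMod 2) :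
    ((-1 : ℂ)) ^ (s + t).val = (-1) ^ s.val * (-1) ^ t.val := by
  rw [ZMod.val_add, ← neg_one_pow_eq_pow_mod_two, pow_add]

lemma pauliBase_split {ι₁ ι₂ : Type*} [Fintype ι₁] [DecidableEq ι₁] [Fintype ι₂] [DecidableEq ι₂]
    (x z : (ι₁ ⊕ ι₂) → ZMod 2) :
    pauliBase x z = mtensor (pauliBase (x ∘ Sum.inl) (z ∘ Sum.inl))
      (pauliBase (x ∘ Sum.inr) (z ∘ Sum.inr)) := by
  ext a b
  simp only [pauliBase, mtensor, Matrix.of_apply]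
  have hsum : (∑ i : ι₁ ⊕ ι₂, z i * b i)
      = (∑ i, (z ∘ Sum.inl) i * (b ∘ Sum.inl) i) + (∑ i, (z ∘ Sum.inr) i * (b ∘ Sum.inr) i) := by
    rw [Fintype.sum_sum_type]; rfl
  by_cases h1 : a ∘ Sum.inl = x ∘ Sum.inl + b ∘ Sum.inl <;>
    by_cases h2 : a ∘ Sum.inr = x ∘ Sum.inr + b ∘ Sum.inr
  · have h : a = x + b := by rw [sum_fun_eq_iff]; exact ⟨h1, h2⟩
    rw [if_pos h, if_pos h1, if_pos h2, hsum, neg_one_pow_val_add]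
  all_goals
    have h : ¬ a = x + b := by rw [sum_fun_eq_iff a (x + b)]; tauto
    rw [if_neg h]
    simp [h1, h2]
lemma isPauli_one {ι : Type*} [Fintype ι] [DecidableEq ι] :
    IsPauli (1 : Matrix (ι → ZMod 2) (ι → ZMod 2) ℂ) := by
  refine ⟨1, 0, 0, by norm_num, ?_⟩
  ext a b
  simp [pauliBase, Matrix.one_apply]

lemma isPauli_mtensor {ι₁ ι₂ : Type*} [Fintype ι₁] [DecidableEq ι₁] [Fintype ι₂] [DecidableEq ι₂]
    {M : Matrix (ι₁ → ZMod 2) (ι₁ → ZMod 2) ℂ} {N : Matrix (ι₂ → ZMod 2) (ι₂ → ZMod 2) ℂ}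
    (hM : IsPauli M) (hN : IsPauli N) : IsPauli (mtensor M N) := by
  obtain ⟨c, x, z, hc, rfl⟩ := hM
  obtain ⟨d, x', z', hd, rfl⟩ := hN
  refine ⟨c * d, Sum.elim x x', Sum.elim z z', by rw [mul_pow, hc, hd, one_mul], ?_⟩
  rw [pauliBase_split (Sum.elim x x') (Sum.elim z z')]
  simp only [Sum.elim_comp_inl, Sum.elim_comp_inr]
  ext a b
  simp only [mtensor, Matrix.of_apply, Matrix.smul_apply, smul_eq_mul]
  ring

lemma isPauli_split {ι₁ ι₂ : Type*} [Fintype ι₁] [DecidableEq ι₁] [Fintype ι₂] [DecidableEq ι₂]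
    {P : Matrix ((ι₁ ⊕ ι₂) → ZMod 2) ((ι₁ ⊕ ι₂) → ZMod 2) ℂ} (hP : IsPauli P) :
    ∃ P₁ P₂, IsPauli P₁ ∧ IsPauli P₂ ∧ P = mtensor P₁ P₂ := by
  obtain ⟨c, x, z, hc, rfl⟩ := hP
  refine ⟨c • pauliBase (x ∘ Sum.inl) (z ∘ Sum.inl), pauliBase (x ∘ Sum.inr) (z ∘ Sum.inr),
    ⟨c, _, _, hc, rfl⟩, ⟨1, _, _, by norm_num, (one_smul _ _).symm⟩, ?_⟩
  rw [mtensor_smul_left, ← pauliBase_split]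

-- mulVec slice lemmas
lemma mulVec_mtensor_one_left {ι₁ ι₂ κ₂ : Type*} [Fintype ι₁] [DecidableEq ι₁]
    [Fintype κ₂] [DecidableEq κ₂]
    (M : Matrix (ι₂ → ZMod 2) (κ₂ → ZMod 2) ℂ) (v : ((ι₁ ⊕ κ₂) → ZMod 2) → ℂ)
    (c : (ι₁ ⊕ ι₂) → ZMod 2) :
    (mtensor (1 : Matrix (ι₁ → ZMod 2) (ι₁ → ZMod 2) ℂ) M).mulVec v c
      = M.mulVec (fun b => v (Sum.elim (c ∘ Sum.inl) b)) (c ∘ Sum.inr) := by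
  simp only [Matrix.mulVec, dotProduct, mtensor, Matrix.of_apply]
  rw [← Equiv.sum_comp (Equiv.sumArrowEquivProdArrow ι₁ κ₂ (ZMod 2)).symm, Fintype.sum_prod_type]
  simp only [Equiv.sumArrowEquivProdArrow, Equiv.coe_fn_symm_mk, Sum.elim_comp_inl,
    Sum.elim_comp_inr, Matrix.one_apply]
  rw [Finset.sum_eq_single (c ∘ Sum.inl)]
  · simp
  · intro a' _ ha'
    simp [Ne.symm ha']
  · simp

lemma mulVec_mtensor_one_right {ι₁ ι₂ κ₁ : Type*} [Fintype ι₂] [DecidableEq ι₂]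
    [Fintype κ₁] [DecidableEq κ₁]
    (M : Matrix (ι₁ → ZMod 2) (κ₁ → ZMod 2) ℂ) (v : ((κ₁ ⊕ ι₂) → ZMod 2) → ℂ)
    (c : (ι₁ ⊕ ι₂) → ZMod 2) :
    (mtensor M (1 : Matrix (ι₂ → ZMod 2) (ι₂ → ZMod 2) ℂ)).mulVec v c
      = M.mulVec (fun a => v (Sum.elim a (c ∘ Sum.inr))) (c ∘ Sum.inl) := by
  simp only [Matrix.mulVec, dotProduct, mtensor, Matrix.of_apply]
  rw [← Equiv.sum_comp (Equiv.sumArrowEquivProdArrow κ₁ ι₂ (ZMod 2)).symm, Fintype.sum_prod_type]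
  simp only [Equiv.sumArrowEquivProdArrow, Equiv.coe_fn_symm_mk, Sum.elim_comp_inl,
    Sum.elim_comp_inr, Matrix.one_apply]
  rw [Finset.sum_comm, Finset.sum_eq_single (c ∘ Sum.inr)]
  · simp
  · intro b' _ hb'
    simp [Ne.symm hb']
  · simp

lemma ext_of_mulVec {m n : Type*} [Fintype n] [DecidableEq n]
    {A B : Matrix (m → ZMod 2) (n → ZMod 2) ℂ}
    (h : ∀ v, A.mulVec v = B.mulVec v) : A = B := by
  ext i j
  have := congrFun (h (Pi.single j 1)) i
  simpa [Matrix.mulVec_single] using this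

lemma proj_fix {n k : Type*} [Fintype n] [DecidableEq n] [Fintype k] [DecidableEq k]
    (M : Matrix (n → ZMod 2) (k → ZMod 2) ℂ) (hiso : Mᴴ * M = 1)
    {u : (n → ZMod 2) → ℂ} (hu : u ∈ Set.range M.mulVec) :
    (M * Mᴴ).mulVec u = u := by
  obtain ⟨w, rfl⟩ := hu
  rw [Matrix.mulVec_mulVec, Matrix.mul_assoc, hiso, Matrix.mul_one]
lemma reindex_mtensor_assoc {E F G E' F' G' : Type*}
    (A : Matrix (E → ZMod 2) (E' → ZMod 2) ℂ) (B : Matrix (F → ZMod 2) (F' → ZMod 2) ℂ)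
    (C : Matrix (G → ZMod 2) (G' → ZMod 2) ℂ) :
    Matrix.reindex ((Equiv.sumAssoc E F G).arrowCongr (Equiv.refl (ZMod 2)))
        ((Equiv.sumAssoc E' F' G').arrowCongr (Equiv.refl (ZMod 2)))
        (mtensor (mtensor A B) C) = mtensor A (mtensor B C) := by
  ext a b
  simp only [mtensor, Matrix.reindex_apply, Matrix.submatrix_apply, Matrix.of_apply,
    Equiv.arrowCongr, Equiv.coe_fn_symm_mk, Equiv.coe_fn_mk, Equiv.refl_symm, Equiv.coe_refl,
    Equiv.sumAssoc]
  rw [mul_assoc]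
  rfl

lemma tensor_fix_left {I H K : Type*} [Fintype I] [DecidableEq I] [Fintype H] [DecidableEq H]
    [Fintype K] [DecidableEq K]
    (M : Matrix (H → ZMod 2) (K → ZMod 2) ℂ) (S : Set (Matrix (H → ZMod 2) (H → ZMod 2) ℂ))
    (hiso : Mᴴ * M = 1) (hfix : Set.range M.mulVec = fixedSet S)
    (v : ((I ⊕ H) → ZMod 2) → ℂ)
    (hv : ∀ s ∈ S, (mtensor (1 : Matrix (I → ZMod 2) (I → ZMod 2) ℂ) s).mulVec v = v) :
    (mtensor (1 : Matrix (I → ZMod 2) (I → ZMod 2) ℂ) (M * Mᴴ)).mulVec v = v := by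
  funext c
  rw [mulVec_mtensor_one_left]
  have hslice : (fun b => v (Sum.elim (c ∘ Sum.inl) b)) ∈ fixedSet S := by
    intro s hs
    funext b
    have h := congrFun (hv s hs) (Sum.elim (c ∘ Sum.inl) b)
    rw [mulVec_mtensor_one_left] at h
    simpa using h
  rw [← hfix] at hslice
  rw [congrFun (proj_fix M hiso hslice) (c ∘ Sum.inr)]
  simp

lemma tensor_fix_right {I H K : Type*} [Fintype I] [DecidableEq I] [Fintype H] [DecidableEq H]
    [Fintype K] [DecidableEq K]
    (M : Matrix (H → ZMod 2) (K → ZMod 2) ℂ) (S : Set (Matrix (H → ZMod 2) (H → ZMod 2) ℂ))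
    (hiso : Mᴴ * M = 1) (hfix : Set.range M.mulVec = fixedSet S)
    (v : ((H ⊕ I) → ZMod 2) → ℂ)
    (hv : ∀ s ∈ S, (mtensor s (1 : Matrix (I → ZMod 2) (I → ZMod 2) ℂ)).mulVec v = v) :
    (mtensor (M * Mᴴ) (1 : Matrix (I → ZMod 2) (I → ZMod 2) ℂ)).mulVec v = v := by
  funext c
  rw [mulVec_mtensor_one_right]
  have hslice : (fun a => v (Sum.elim a (c ∘ Sum.inr))) ∈ fixedSet S := by
    intro s hs
    funext a
    have h := congrFun (hv s hs) (Sum.elim a (c ∘ Sum.inr))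
    rw [mulVec_mtensor_one_right] at h
    simpa using h
  rw [← hfix] at hslice
  rw [congrFun (proj_fix M hiso hslice) (c ∘ Sum.inl)]
  simp
lemma submatrix_row_mul {l m n p : Type*} [Fintype n] (f : l → m)
    (M : Matrix m n ℂ) (N : Matrix n p ℂ) :
    M.submatrix f id * N = (M * N).submatrix f id := by
  have := Matrix.submatrix_mul_equiv M N f (Equiv.refl n) id
  simpa using this

lemma submatrix_row_mulVec {l m n : Type*} [Fintype n] (f : l → m)
    (M : Matrix m n ℂ) (v : n → ℂ) :
    (M.submatrix f id).mulVec v = M.mulVec v ∘ f := by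
  funext i
  simp [Matrix.mulVec, dotProduct, Matrix.submatrix_apply]
/-- Composing the Clifford encoding isometry `M₁` of an
`[[n₁,k₁]]` stabilizer code (stabilizer `S₁`, outputs on qubits `E ⊕ F` with
`|F| = m`) with the Clifford encoding isometry `M₂` of an `[[n₂,k₂]]`
stabilizer code (stabilizer `S₂`) applied to the `m` output qubits `F`
together with `k₂ − m` fresh input qubits `G`, yields the Clifford encoding
isometry of an `[[n₁−m+n₂, k₁+k₂−m]]` stabilizer code whose stabilizer group
is generated by `S₂` and `M₂(S₁)` (operators extended by identities as
needed). -/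
theorem stabilizer_isometry_composition
    {A E F G H : Type*}
    [Fintype A] [DecidableEq A] [Fintype E] [DecidableEq E]
    [Fintype F] [DecidableEq F] [Fintype G] [DecidableEq G]
    [Fintype H] [DecidableEq H]
    (n₁ k₁ n₂ k₂ m : ℕ) (hm1 : m ≤ n₁) (hm2 : m ≤ k₂)
    (hcardA : Fintype.card A = k₁) (hcardE : Fintype.card E = n₁ - m)
    (hcardF : Fintype.card F = m) (hcardG : Fintype.card G = k₂ - m)
    (hcardH : Fintype.card H = n₂)
    (M₁ : Matrix ((E ⊕ F) → ZMod 2) (A → ZMod 2) ℂ)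
    (M₂ : Matrix (H → ZMod 2) ((F ⊕ G) → ZMod 2) ℂ)
    (hM₁iso : M₁ᴴ * M₁ = 1) (hM₂iso : M₂ᴴ * M₂ = 1)
    (hM₁cliff : ∀ P, IsPauli P → ∃ Q, IsPauli Q ∧ M₁ * P = Q * M₁)
    (hM₂cliff : ∀ P, IsPauli P → ∃ Q, IsPauli Q ∧ M₂ * P = Q * M₂)
    (S₁ : Set (Matrix ((E ⊕ F) → ZMod 2) ((E ⊕ F) → ZMod 2) ℂ))
    (S₂ : Set (Matrix (H → ZMod 2) (H → ZMod 2) ℂ))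
    (hS₁p : ∀ s ∈ S₁, IsPauli s) (hS₂p : ∀ s ∈ S₂, IsPauli s)
    (hS₁comm : ∀ s ∈ S₁, ∀ s' ∈ S₁, s * s' = s' * s)
    (hS₂comm : ∀ s ∈ S₂, ∀ s' ∈ S₂, s * s' = s' * s)
    (hS₁fix : Set.range M₁.mulVec = fixedSet S₁)
    (hS₂fix : Set.range M₂.mulVec = fixedSet S₂) :
    -- the composite encoding isometry
    let e : (((E ⊕ F) ⊕ G) → ZMod 2) ≃ ((E ⊕ (F ⊕ G)) → ZMod 2) :=
      (Equiv.sumAssoc E F G).arrowCongr (Equiv.refl (ZMod 2))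
    let Cmp : Matrix ((E ⊕ H) → ZMod 2) ((A ⊕ G) → ZMod 2) ℂ :=
      mtensor (1 : Matrix (E → ZMod 2) (E → ZMod 2) ℂ) M₂ *
        Matrix.reindex e (Equiv.refl (A ⊕ G → ZMod 2))
          (mtensor M₁ (1 : Matrix (G → ZMod 2) (G → ZMod 2) ℂ))
    -- it encodes k₁ + k₂ − m qubits into n₁ − m + n₂ qubits,
    Fintype.card (A ⊕ G) = k₁ + k₂ - m ∧
    Fintype.card (E ⊕ H) = n₁ - m + n₂ ∧
    -- it is a Clifford isometry,
    Cmpᴴ * Cmp = 1 ∧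
    (∀ P, IsPauli P → ∃ Q, IsPauli Q ∧ Cmp * P = Q * Cmp) ∧
    -- and its range is the stabilizer code stabilized by S₂ and M₂(S₁):
    ∃ t : Matrix ((E ⊕ F) → ZMod 2) ((E ⊕ F) → ZMod 2) ℂ →
          Matrix ((E ⊕ H) → ZMod 2) ((E ⊕ H) → ZMod 2) ℂ,
      (∀ s ∈ S₁, IsPauli (t s) ∧
        mtensor (1 : Matrix (E → ZMod 2) (E → ZMod 2) ℂ) M₂ *
            Matrix.reindex e e
              (mtensor s (1 : Matrix (G → ZMod 2) (G → ZMod 2) ℂ)) =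
          t s * mtensor (1 : Matrix (E → ZMod 2) (E → ZMod 2) ℂ) M₂) ∧
      Set.range Cmp.mulVec =
        fixedSet ((fun s₂ => mtensor (1 : Matrix (E → ZMod 2) (E → ZMod 2) ℂ) s₂) '' S₂
          ∪ t '' S₁) := by
  intro e Cmp
  classical
  set T : Matrix ((E ⊕ H) → ZMod 2) ((E ⊕ (F ⊕ G)) → ZMod 2) ℂ :=
    mtensor (1 : Matrix (E → ZMod 2) (E → ZMod 2) ℂ) M₂ with hT
  set X : Matrix (((E ⊕ F) ⊕ G) → ZMod 2) ((A ⊕ G) → ZMod 2) ℂ :=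
    mtensor M₁ (1 : Matrix (G → ZMod 2) (G → ZMod 2) ℂ) with hX
  have hCmp : Cmp = T * X.submatrix ⇑e.symm id := by
    show Cmp = T * X.submatrix ⇑e.symm id
    rw [show Cmp = T * Matrix.reindex e (Equiv.refl ((A ⊕ G) → ZMod 2)) X from rfl,
      Matrix.reindex_apply]
    rfl
  have hTdag : Tᴴ = mtensor (1 : Matrix (E → ZMod 2) (E → ZMod 2) ℂ) M₂ᴴ := by
    rw [hT, mtensor_conjTranspose, Matrix.conjTranspose_one]
  have hTT : Tᴴ * T = 1 := by
    rw [hTdag, hT, mtensor_mul, hM₂iso, Matrix.one_mul, mtensor_one]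
  have hXdag : Xᴴ = mtensor M₁ᴴ (1 : Matrix (G → ZMod 2) (G → ZMod 2) ℂ) := by
    rw [hX, mtensor_conjTranspose, Matrix.conjTranspose_one]
  have hXX : Xᴴ * X = 1 := by
    rw [hXdag, hX, mtensor_mul, hM₁iso, Matrix.one_mul, mtensor_one]
  have hassoc : ∀ (P₁ : Matrix (E → ZMod 2) (E → ZMod 2) ℂ)
      (P₂ : Matrix (F → ZMod 2) (F → ZMod 2) ℂ) (P₃ : Matrix (G → ZMod 2) (G → ZMod 2) ℂ),
      (mtensor (mtensor P₁ P₂) P₃).submatrix ⇑e.symm ⇑e.symm = mtensor P₁ (mtensor P₂ P₃) := by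
    intro P₁ P₂ P₃
    have h := reindex_mtensor_assoc P₁ P₂ P₃
    rw [Matrix.reindex_apply] at h
    exact h
  have hcancel : ∀ (x y : ((E ⊕ (F ⊕ G)) → ZMod 2) → ℂ),
      T.mulVec x = T.mulVec y → x = y := by
    intro x y hxy
    have h := congrArg Tᴴ.mulVec hxy
    rwa [Matrix.mulVec_mulVec, Matrix.mulVec_mulVec, hTT, Matrix.one_mulVec,
      Matrix.one_mulVec] at h
  have hsM₁ : ∀ s ∈ S₁, s * M₁ = M₁ := by
    intro s hs
    apply ext_of_mulVec
    intro v
    rw [← Matrix.mulVec_mulVec]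
    have hmem : M₁.mulVec v ∈ fixedSet S₁ := hS₁fix ▸ Set.mem_range_self v
    exact hmem s hs
  have hsM₂ : ∀ s ∈ S₂, s * M₂ = M₂ := by
    intro s hs
    apply ext_of_mulVec
    intro v
    rw [← Matrix.mulVec_mulVec]
    have hmem : M₂.mulVec v ∈ fixedSet S₂ := hS₂fix ▸ Set.mem_range_self v
    exact hmem s hs
  refine ⟨?_, ?_, ?_, ?_, ?_⟩
  · rw [Fintype.card_sum, hcardA, hcardG]; omega
  · rw [Fintype.card_sum, hcardE, hcardH]
  · -- isometry
    rw [hCmp, Matrix.conjTranspose_mul, Matrix.conjTranspose_submatrix, Matrix.mul_assoc,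
      ← Matrix.mul_assoc Tᴴ T, hTT, Matrix.one_mul,
      Matrix.submatrix_mul_equiv Xᴴ X id e.symm id, hXX]
    simp
  · -- Clifford
    intro P hP
    obtain ⟨P₁, P₂, hP₁, hP₂, rfl⟩ := isPauli_split hP
    obtain ⟨Q₁, hQ₁, hQ₁eq⟩ := hM₁cliff P₁ hP₁
    obtain ⟨QE, QF, hQE, hQF, rfl⟩ := isPauli_split hQ₁
    obtain ⟨QH, hQH, hQHeq⟩ := hM₂cliff (mtensor QF P₂) (isPauli_mtensor hQF hP₂)
    refine ⟨mtensor QE QH, isPauli_mtensor hQE hQH, ?_⟩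
    have hXP : X * mtensor P₁ P₂ = mtensor (mtensor QE QF) P₂ * X := by
      rw [hX, mtensor_mul, mtensor_mul, (show M₁ * P₁ = mtensor QE QF * M₁ from hQ₁eq), Matrix.one_mul, Matrix.mul_one]
    have hTQ : T * mtensor QE (mtensor QF P₂) = mtensor QE QH * T := by
      rw [hT, mtensor_mul, mtensor_mul, (show M₂ * mtensor QF P₂ = QH * M₂ from hQHeq), Matrix.one_mul, Matrix.mul_one]
    calc Cmp * mtensor P₁ P₂
        = T * (X.submatrix ⇑e.symm id * mtensor P₁ P₂) := by rw [hCmp, Matrix.mul_assoc]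
      _ = T * ((X * mtensor P₁ P₂).submatrix ⇑e.symm id) := by rw [submatrix_row_mul]
      _ = T * ((mtensor (mtensor QE QF) P₂ * X).submatrix ⇑e.symm id) := by rw [hXP]
      _ = T * ((mtensor (mtensor QE QF) P₂).submatrix ⇑e.symm ⇑e.symm
            * X.submatrix ⇑e.symm id) := by
            rw [Matrix.submatrix_mul_equiv (mtensor (mtensor QE QF) P₂) X ⇑e.symm e.symm id]
      _ = (T * mtensor QE (mtensor QF P₂)) * X.submatrix ⇑e.symm id := by
            rw [hassoc, Matrix.mul_assoc]
      _ = (mtensor QE QH * T) * X.submatrix ⇑e.symm id := by rw [hTQ]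
      _ = mtensor QE QH * Cmp := by rw [hCmp, Matrix.mul_assoc]
  · -- the stabilizer group of the composite code
    have hts : ∀ s ∈ S₁, ∃ Q : Matrix ((E ⊕ H) → ZMod 2) ((E ⊕ H) → ZMod 2) ℂ, IsPauli Q ∧
        T * Matrix.reindex e e (mtensor s (1 : Matrix (G → ZMod 2) (G → ZMod 2) ℂ)) = Q * T := by
      intro s hs
      obtain ⟨sE, sF, hsE, hsF, rfl⟩ := isPauli_split (hS₁p s hs)
      obtain ⟨QH, hQH, hQHeq⟩ := hM₂cliff (mtensor sF (1 : Matrix (G → ZMod 2) (G → ZMod 2) ℂ))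
        (isPauli_mtensor hsF isPauli_one)
      refine ⟨mtensor sE QH, isPauli_mtensor hsE hQH, ?_⟩
      rw [Matrix.reindex_apply, hassoc, hT, mtensor_mul, mtensor_mul,
        (show M₂ * mtensor sF (1 : Matrix (G → ZMod 2) (G → ZMod 2) ℂ) = QH * M₂ from hQHeq),
        Matrix.one_mul, Matrix.mul_one]
    refine ⟨fun s => if h : ∃ Q : Matrix ((E ⊕ H) → ZMod 2) ((E ⊕ H) → ZMod 2) ℂ, IsPauli Q ∧
        T * Matrix.reindex e e (mtensor s (1 : Matrix (G → ZMod 2) (G → ZMod 2) ℂ)) = Q * T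
      then h.choose else 1, ?_, ?_⟩
    · intro s hs
      have h := hts s hs
      simp only [dif_pos h]
      exact ⟨h.choose_spec.1, h.choose_spec.2⟩
    · apply Set.Subset.antisymm
      · -- range ⊆ fixedSet
        rintro v ⟨u, rfl⟩ g hg
        rcases hg with ⟨s₂, hs₂, rfl⟩ | ⟨s, hs, rfl⟩
        · have h1 : mtensor (1 : Matrix (E → ZMod 2) (E → ZMod 2) ℂ) s₂ * T = T := by
            rw [hT, mtensor_mul, hsM₂ s₂ hs₂, Matrix.one_mul]
          have hkey : mtensor (1 : Matrix (E → ZMod 2) (E → ZMod 2) ℂ) s₂ * Cmp = Cmp := by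
            rw [hCmp, ← Matrix.mul_assoc, h1]
          rw [Matrix.mulVec_mulVec, hkey]
        · have h := hts s hs
          have h1 : mtensor s (1 : Matrix (G → ZMod 2) (G → ZMod 2) ℂ) * X = X := by
            rw [hX, mtensor_mul, hsM₁ s hs, Matrix.one_mul]
          have hre : Matrix.reindex e e (mtensor s (1 : Matrix (G → ZMod 2) (G → ZMod 2) ℂ))
              * X.submatrix ⇑e.symm id = X.submatrix ⇑e.symm id := by
            rw [Matrix.reindex_apply,
              Matrix.submatrix_mul_equiv (mtensor s (1 : Matrix (G → ZMod 2) (G → ZMod 2) ℂ))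
                X ⇑e.symm e.symm id, h1]
          have hkey : h.choose * Cmp = Cmp := by
            rw [hCmp, ← Matrix.mul_assoc, ← h.choose_spec.2, Matrix.mul_assoc, hre]
          simp only [dif_pos h]
          rw [Matrix.mulVec_mulVec, hkey]
      · -- fixedSet ⊆ range
        intro v hv
        have hv₂ : ∀ s₂ ∈ S₂,
            (mtensor (1 : Matrix (E → ZMod 2) (E → ZMod 2) ℂ) s₂).mulVec v = v := by
          intro s₂ hs₂
          exact hv _ (Set.mem_union_left _ ⟨s₂, hs₂, rfl⟩)
        set w : ((E ⊕ (F ⊕ G)) → ZMod 2) → ℂ := Tᴴ.mulVec v with hw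
        have hTw : T.mulVec w = v := by
          rw [hw, Matrix.mulVec_mulVec]
          have hTTd : T * Tᴴ = mtensor (1 : Matrix (E → ZMod 2) (E → ZMod 2) ℂ) (M₂ * M₂ᴴ) := by
            rw [hT, hTdag, mtensor_mul, Matrix.one_mul]
          rw [hTTd]
          exact tensor_fix_left M₂ S₂ hM₂iso hS₂fix v hv₂
        have hBs : ∀ s ∈ S₁,
            (Matrix.reindex e e (mtensor s (1 : Matrix (G → ZMod 2) (G → ZMod 2) ℂ))).mulVec w
              = w := by
          intro s hs
          have h := hts s hs
          have hv₁ : h.choose.mulVec v = v := by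
            have hfix := hv _ (Set.mem_union_right _ ⟨s, hs, rfl⟩)
            exact (by simpa only [dif_pos h] using hfix : h.choose.mulVec v = v)
          apply hcancel
          rw [Matrix.mulVec_mulVec, h.choose_spec.2, ← Matrix.mulVec_mulVec, hTw, hv₁]
        have hC : ∀ s ∈ S₁,
            (mtensor s (1 : Matrix (G → ZMod 2) (G → ZMod 2) ℂ)).mulVec (w ∘ ⇑e) = w ∘ ⇑e := by
          intro s hs
          have h := hBs s hs
          rw [Matrix.reindex_apply,
            Matrix.submatrix_mulVec_equiv (mtensor s (1 : Matrix (G → ZMod 2) (G → ZMod 2) ℂ))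
              w ⇑e.symm e.symm] at h
          funext c
          have h2 := congrFun h (e c)
          simpa using h2
        have hD : X.mulVec ((mtensor M₁ᴴ (1 : Matrix (G → ZMod 2) (G → ZMod 2) ℂ)).mulVec
            (w ∘ ⇑e)) = w ∘ ⇑e := by
          rw [Matrix.mulVec_mulVec, hX, mtensor_mul, Matrix.one_mul]
          exact tensor_fix_right M₁ S₁ hM₁iso hS₁fix (w ∘ ⇑e) hC
        refine ⟨(mtensor M₁ᴴ (1 : Matrix (G → ZMod 2) (G → ZMod 2) ℂ)).mulVec (w ∘ ⇑e), ?_⟩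
        rw [hCmp, ← Matrix.mulVec_mulVec, submatrix_row_mulVec, hD]
        rw [show (w ∘ ⇑e) ∘ ⇑e.symm = w from by funext c; simp, hTw]
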